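/- Fix β > 0 and a nonempty compact convex set X. The function η(x, z) := min_{y∈X} (⟨z, y-x⟩ + (β/2)‖y-x‖²) has gradient ∇η given pointwise by ∇_x η(x,z) = -z - β(y*(x,z) - x) and ∇_z η(x,z) = y*(x,z) - x where y*(x,z) is the unique minimizer, and this gradient is Lipschitz continuous in (x,z) with constant 2√((1+β)² + (1 + 1/(2β))²). -/

import Mathlib

open scoped RealInnerProductSpace BigOperators

noncomputable section

section Aux

variable {F : Type*} [NormedAddCommGroup F] [InnerProductSpace ℝ F]

lemma aux_expand (z x w y : F) (β t : ℝ) :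
    ⟪z, (w + t • (y - w)) - x⟫ + β / 2 * ‖(w + t • (y - w)) - x‖ ^ 2
      = (⟪z, w - x⟫ + β / 2 * ‖w - x‖ ^ 2) + t * ⟪z + β • (w - x), y - w⟫
        + t ^ 2 * (β / 2 * ‖y - w‖ ^ 2) := by
  have h1 : (w + t • (y - w)) - x = (w - x) + t • (y - w) := by abel
  rw [h1, norm_add_sq_real, inner_add_right, real_inner_smul_right, inner_add_left,
    real_inner_smul_left, norm_smul]
  simp only [Real.norm_eq_abs, mul_pow, sq_abs, real_inner_smul_right]
  ring

lemma aux_vi {X : Set F} (hXconv : Convex ℝ X) {β : ℝ} (hβ : 0 < β) (z x : F)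
    {w : F} (hw : w ∈ X)
    (hmin : IsMinOn (fun y => ⟪z, y - x⟫ + β / 2 * ‖y - x‖ ^ 2) X w)
    {y : F} (hy : y ∈ X) : 0 ≤ ⟪z + β • (w - x), y - w⟫ := by
  by_contra hcon
  push_neg at hcon
  set a := ⟪z + β • (w - x), y - w⟫ with ha
  set b := β / 2 * ‖y - w‖ ^ 2 with hb
  have hb0 : 0 ≤ b := by positivity
  set t : ℝ := min 1 (-a / (2 * (b + 1))) with ht
  have ht0 : 0 < t := lt_min one_pos (div_pos (by linarith) (by positivity))
  have ht1 : t ≤ 1 := min_le_left _ _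
  have hmemX : w + t • (y - w) ∈ X := by
    have h := hXconv hw hy (by linarith : (0:ℝ) ≤ 1 - t) (le_of_lt ht0) (by ring)
    convert h using 1
    module
  have hle := isMinOn_iff.mp hmin _ hmemX
  rw [aux_expand z x w y β t, ← ha, ← hb] at hle
  have key : 0 ≤ t * a + t ^ 2 * b := by linarith
  have h3 : t ≤ -a / (2 * (b + 1)) := min_le_right _ _
  have h4 : t * b ≤ (-a / (2 * (b + 1))) * b := mul_le_mul_of_nonneg_right h3 hb0
  have h5 : (-a / (2 * (b + 1))) * b ≤ -a / 2 := by
    rw [div_mul_eq_mul_div, div_le_div_iff₀ (by positivity) (by norm_num)]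
    nlinarith
  nlinarith [mul_le_mul_of_nonneg_left (h4.trans h5) ht0.le]

lemma aux_lip {β : ℝ} (hβ : 0 < β) {x₁ z₁ x₂ z₂ w₁ w₂ : F}
    (h1 : 0 ≤ ⟪z₁ + β • (w₁ - x₁), w₂ - w₁⟫)
    (h2 : 0 ≤ ⟪z₂ + β • (w₂ - x₂), w₁ - w₂⟫) :
    β * ‖w₁ - w₂‖ ≤ β * ‖x₁ - x₂‖ + ‖z₁ - z₂‖ := by
  have hv : (z₁ + β • (w₁ - x₁)) - (z₂ + β • (w₂ - x₂))
      = (z₁ - z₂) + β • (x₂ - x₁) - β • (w₂ - w₁) := by module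
  have h2' : ⟪z₂ + β • (w₂ - x₂), w₁ - w₂⟫ = - ⟪z₂ + β • (w₂ - x₂), w₂ - w₁⟫ := by
    rw [← inner_neg_right]; congr 1; abel
  have hsum : 0 ≤ ⟪(z₁ - z₂) + β • (x₂ - x₁) - β • (w₂ - w₁), w₂ - w₁⟫ := by
    rw [← hv, inner_sub_left]
    rw [h2'] at h2
    linarith
  rw [inner_sub_left, inner_add_left, real_inner_smul_left, real_inner_smul_left,
    real_inner_self_eq_norm_sq] at hsum
  have cs1 : ⟪z₁ - z₂, w₂ - w₁⟫ ≤ ‖z₁ - z₂‖ * ‖w₂ - w₁‖ := real_inner_le_norm _ _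
  have cs2 : ⟪x₂ - x₁, w₂ - w₁⟫ ≤ ‖x₂ - x₁‖ * ‖w₂ - w₁‖ := real_inner_le_norm _ _
  rw [norm_sub_rev x₂ x₁] at cs2
  rw [norm_sub_rev w₁ w₂]
  rcases eq_or_lt_of_le (norm_nonneg (w₂ - w₁)) with hd | hd
  · rw [← hd, mul_zero]
    positivity
  · nlinarith [mul_le_mul_of_nonneg_left cs2 hβ.le]

lemma aux_diff (z x : F) (β : ℝ) (d e y : F) :
    (⟪z + e, y - (x + d)⟫ + β / 2 * ‖y - (x + d)‖ ^ 2)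
        - (⟪z, y - x⟫ + β / 2 * ‖y - x‖ ^ 2)
      = ⟪-z - β • (y - x), d⟫ + ⟪y - x, e⟫ - ⟪e, d⟫ + β / 2 * ‖d‖ ^ 2 := by
  have h1 : y - (x + d) = (y - x) - d := by abel
  rw [h1, norm_sub_sq_real, real_inner_comm e (y - x)]
  simp only [inner_sub_left, inner_sub_right, inner_add_left, inner_neg_left,
    real_inner_smul_left]
  ring


set_option maxHeartbeats 1000000 in
lemma aux_key {X : Set F} {β : ℝ} (hβ : 0 < β) {x z x' z' w w' : F}
    (hw : w ∈ X) (hw' : w' ∈ X)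
    (hminw : IsMinOn (fun y => ⟪z, y - x⟫ + β / 2 * ‖y - x‖ ^ 2) X w)
    (hminw' : IsMinOn (fun y => ⟪z', y - x'⟫ + β / 2 * ‖y - x'‖ ^ 2) X w')
    (hlip : β * ‖w - w'‖ ≤ β * ‖x - x'‖ + ‖z - z'‖) :
    |(⟪z', w' - x'⟫ + β / 2 * ‖w' - x'‖ ^ 2) - (⟪z, w - x⟫ + β / 2 * ‖w - x‖ ^ 2)
      - (⟪-z - β • (w - x), x' - x⟫ + ⟪w - x, z' - z⟫)|
      ≤ (β + 1 / β + 4) * (‖x' - x‖ ^ 2 + ‖z' - z‖ ^ 2) := by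
  have hx' : x' = x + (x' - x) := by abel
  have hz' : z' = z + (z' - z) := by abel
  have hDw := aux_diff z x β (x' - x) (z' - z) w
  have hDw' := aux_diff z x β (x' - x) (z' - z) w'
  rw [← hx', ← hz'] at hDw hDw'
  -- upper bound
  have hup : (⟪z', w' - x'⟫ + β / 2 * ‖w' - x'‖ ^ 2) ≤ ⟪z', w - x'⟫ + β / 2 * ‖w - x'‖ ^ 2 :=
    isMinOn_iff.mp hminw' w hw
  have hlo : (⟪z, w - x⟫ + β / 2 * ‖w - x‖ ^ 2) ≤ ⟪z, w' - x⟫ + β / 2 * ‖w' - x‖ ^ 2 :=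
    isMinOn_iff.mp hminw w' hw'
  -- splitting the inner products with w' in terms of w
  have hs1 : ⟪-z - β • (w' - x), x' - x⟫
      = ⟪-z - β • (w - x), x' - x⟫ - β * ⟪w' - w, x' - x⟫ := by
    have hv : -z - β • (w' - x) = (-z - β • (w - x)) - β • (w' - w) := by module
    rw [hv, inner_sub_left, real_inner_smul_left]
  have hs2 : ⟪w' - x, z' - z⟫ = ⟪w - x, z' - z⟫ + ⟪w' - w, z' - z⟫ := by
    rw [← inner_add_left]
    congr 1
    abel
  -- scalar abbreviations
  set a := ‖x' - x‖ with ha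
  set b := ‖z' - z‖ with hb
  set m := ‖w' - w‖ with hm
  have ha0 : 0 ≤ a := norm_nonneg _
  have hb0 : 0 ≤ b := norm_nonneg _
  have hm0 : 0 ≤ m := norm_nonneg _
  have hlip' : β * m ≤ β * a + b := by
    rw [hm, norm_sub_rev]
    rw [ha, norm_sub_rev x' x, hb, norm_sub_rev z' z]
    exact hlip
  have b1 : |⟪z' - z, x' - x⟫| ≤ b * a := by
    rw [hb, ha]; exact abs_real_inner_le_norm _ _
  have b2 : |⟪w' - w, x' - x⟫| ≤ m * a := by
    rw [hm, ha]; exact abs_real_inner_le_norm _ _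
  have b3 : |⟪w' - w, z' - z⟫| ≤ m * b := by
    rw [hm, hb]; exact abs_real_inner_le_norm _ _
  have b1' := abs_le.mp b1
  have b2' := abs_le.mp b2
  have b3' := abs_le.mp b3
  have hd2 : (0:ℝ) ≤ β / 2 * a ^ 2 := by positivity
  rw [abs_le]
  constructor
  · -- lower bound : use hlo and hDw'
    have key : (⟪z', w' - x'⟫ + β / 2 * ‖w' - x'‖ ^ 2) - (⟪z, w - x⟫ + β / 2 * ‖w - x‖ ^ 2)
        ≥ ⟪-z - β • (w - x), x' - x⟫ - β * ⟪w' - w, x' - x⟫ + ⟪w - x, z' - z⟫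
          + ⟪w' - w, z' - z⟫ - ⟪z' - z, x' - x⟫ + β / 2 * a ^ 2 := by
      have := hDw'
      rw [hs1, hs2] at this
      rw [ha]
      linarith
    -- so expr ≥ - (β*m*a + m*b + b*a)
    have hβm : β * m * a ≤ (β * a + b) * a := mul_le_mul_of_nonneg_right hlip' ha0
    have hβmb : β * m * b ≤ (β * a + b) * b := mul_le_mul_of_nonneg_right hlip' hb0
    have h3 : (0:ℝ) ≤ 1 / β := by positivity
    have hmb : m * b ≤ a * b + b ^ 2 / β := by
      rw [← mul_le_mul_iff_right₀ hβ, mul_add, mul_div_cancel₀ _ hβ.ne']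
      nlinarith [hβmb]
    have h4 : b ^ 2 / β ≤ 1 / β * (a ^ 2 + b ^ 2) := by
      rw [div_eq_inv_mul, one_div]
      exact mul_le_mul_of_nonneg_left (by nlinarith [sq_nonneg a]) (inv_nonneg.mpr hβ.le)
    have hfinal : β * m * a + m * b + b * a ≤ (β + 1 / β + 4) * (a ^ 2 + b ^ 2) := by
      nlinarith [sq_nonneg (a - b), mul_nonneg hβ.le (sq_nonneg b), hβm, hmb, h4]
    have h5 : β * ⟪w' - w, x' - x⟫ ≤ β * (m * a) := by
      have := mul_le_mul_of_nonneg_left b2'.2 hβ.le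
      linarith
    linarith [key, hfinal, hd2, b1'.2, b3'.1, h5]
  · -- upper bound : use hup and hDw
    have key : (⟪z', w' - x'⟫ + β / 2 * ‖w' - x'‖ ^ 2) - (⟪z, w - x⟫ + β / 2 * ‖w - x‖ ^ 2)
        ≤ ⟪-z - β • (w - x), x' - x⟫ + ⟪w - x, z' - z⟫ - ⟪z' - z, x' - x⟫
          + β / 2 * a ^ 2 := by
      rw [ha]
      linarith
    have h6 : b * a + β / 2 * a ^ 2 ≤ (β + 1 / β + 4) * (a ^ 2 + b ^ 2) := by
      nlinarith [sq_nonneg (a - b), mul_nonneg hβ.le (sq_nonneg a),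
        mul_nonneg (by positivity : (0:ℝ) ≤ 1/β) (add_nonneg (sq_nonneg a) (sq_nonneg b)),
        mul_nonneg hβ.le (sq_nonneg b)]
    linarith [key, b1'.1, h6]

end Aux

/-- The function `η(x,z) = min_{y∈X}(⟨z, y-x⟩ + (β/2)‖y-x‖²)`, viewed as a function on the
`L²`-product `ℝ^d × ℝ^d`. -/
def etaFun {n : ℕ} (X : Set (EuclideanSpace ℝ (Fin n))) (β : ℝ)
    (q : WithLp 2 (EuclideanSpace ℝ (Fin n) × EuclideanSpace ℝ (Fin n))) : ℝ :=
  sInf ((fun y => ⟪(WithLp.equiv 2 _ q).2, y - (WithLp.equiv 2 _ q).1⟫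
    + β / 2 * ‖y - (WithLp.equiv 2 _ q).1‖ ^ 2) '' X)

/-- The claimed gradient of `η` at `(x,z)`: `(-z - β(y*(x,z) - x), y*(x,z) - x)`. -/
def etaGrad {n : ℕ} (β : ℝ)
    (ystar : EuclideanSpace ℝ (Fin n) → EuclideanSpace ℝ (Fin n) → EuclideanSpace ℝ (Fin n))
    (q : WithLp 2 (EuclideanSpace ℝ (Fin n) × EuclideanSpace ℝ (Fin n))) :
    WithLp 2 (EuclideanSpace ℝ (Fin n) × EuclideanSpace ℝ (Fin n)) :=
  (WithLp.equiv 2 _).symm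
    (-(WithLp.equiv 2 _ q).2
        - β • (ystar (WithLp.equiv 2 _ q).1 (WithLp.equiv 2 _ q).2 - (WithLp.equiv 2 _ q).1),
      ystar (WithLp.equiv 2 _ q).1 (WithLp.equiv 2 _ q).2 - (WithLp.equiv 2 _ q).1)

set_option maxHeartbeats 2000000 in
/-- For a nonempty compact convex set `X` and `β > 0`, the minimizer `y*(x,z)`
of `y ↦ ⟨z,y-x⟩ + (β/2)‖y-x‖²` over `X` is unique; `η` has gradient
`(-z - β(y*(x,z)-x), y*(x,z)-x)` at each point; and this gradient map is Lipschitz with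
constant `2√((1+β)² + (1 + 1/(2β))²)` on the `L²`-product space. -/
theorem stmt6 {n : ℕ} (X : Set (EuclideanSpace ℝ (Fin n)))
    (hXne : X.Nonempty) (hXcp : IsCompact X) (hXconv : Convex ℝ X)
    (β : ℝ) (hβ : 0 < β)
    (ystar : EuclideanSpace ℝ (Fin n) → EuclideanSpace ℝ (Fin n) → EuclideanSpace ℝ (Fin n))
    (hmem : ∀ x z, ystar x z ∈ X)
    (hmin : ∀ x z, IsMinOn (fun y => ⟪z, y - x⟫ + β / 2 * ‖y - x‖ ^ 2) X (ystar x z)) :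
    (∀ x z y, y ∈ X → IsMinOn (fun y' => ⟪z, y' - x⟫ + β / 2 * ‖y' - x‖ ^ 2) X y →
        y = ystar x z) ∧
      (∀ q, HasGradientAt (etaFun X β) (etaGrad β ystar q) q) ∧
      LipschitzWith (2 * Real.sqrt ((1 + β) ^ 2 + (1 + 1 / (2 * β)) ^ 2)).toNNReal
        (etaGrad β ystar) := by
  -- the variational inequality for `ystar`
  have hVI : ∀ x z y, y ∈ X → 0 ≤ ⟪z + β • (ystar x z - x), y - ystar x z⟫ :=
    fun x z y hy => aux_vi hXconv hβ z x (hmem x z) (hmin x z) hy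
  -- Lipschitz property of `ystar`
  have hlip : ∀ x z x' z', β * ‖ystar x z - ystar x' z'‖ ≤ β * ‖x - x'‖ + ‖z - z'‖ :=
    fun x z x' z' =>
      aux_lip hβ (hVI x z _ (hmem x' z')) (hVI x' z' _ (hmem x z))
  -- value of `etaFun`
  have hval : ∀ q : WithLp 2 (EuclideanSpace ℝ (Fin n) × EuclideanSpace ℝ (Fin n)),
      etaFun X β q
      = ⟪(WithLp.equiv 2 _ q).2,
          ystar (WithLp.equiv 2 _ q).1 (WithLp.equiv 2 _ q).2 - (WithLp.equiv 2 _ q).1⟫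
        + β / 2 * ‖ystar (WithLp.equiv 2 _ q).1 (WithLp.equiv 2 _ q).2
            - (WithLp.equiv 2 _ q).1‖ ^ 2 := by
    intro q
    apply IsLeast.csInf_eq
    constructor
    · exact ⟨_, hmem _ _, rfl⟩
    · rintro v ⟨y, hy, rfl⟩
      exact isMinOn_iff.mp (hmin _ _) y hy
  refine ⟨?_, ?_, ?_⟩
  · -- uniqueness
    intro x z y hy hminy
    have h1 := aux_vi hXconv hβ z x hy hminy (hmem x z)
    have h2 := hVI x z y hy
    have h3 := aux_lip hβ h1 h2
    simp only [sub_self, norm_zero, mul_zero, add_zero] at h3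
    have h4 : ‖y - ystar x z‖ ≤ 0 := by nlinarith
    have h5 : ‖y - ystar x z‖ = 0 := le_antisymm h4 (norm_nonneg _)
    exact sub_eq_zero.mp (norm_eq_zero.mp h5)
  · -- gradient
    intro q
    rw [hasGradientAt_iff_hasFDerivAt, hasFDerivAt_iff_isLittleO,
      Asymptotics.isLittleO_iff]
    intro c hc
    have hC : (0:ℝ) < β + 1 / β + 4 := by positivity
    have key : ∀ q' : WithLp 2 (EuclideanSpace ℝ (Fin n) × EuclideanSpace ℝ (Fin n)),
        ‖etaFun X β q' - etaFun X β q
            - (InnerProductSpace.toDual ℝ _ (etaGrad β ystar q)) (q' - q)‖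
          ≤ (β + 1 / β + 4) * ‖q' - q‖ ^ 2 := by
      intro q'
      have hinner : (InnerProductSpace.toDual ℝ _ (etaGrad β ystar q)) (q' - q)
          = ⟪-(WithLp.equiv 2 _ q).2
                - β • (ystar (WithLp.equiv 2 _ q).1 (WithLp.equiv 2 _ q).2
                    - (WithLp.equiv 2 _ q).1),
              (WithLp.equiv 2 _ q').1 - (WithLp.equiv 2 _ q).1⟫
            + ⟪ystar (WithLp.equiv 2 _ q).1 (WithLp.equiv 2 _ q).2 - (WithLp.equiv 2 _ q).1,
              (WithLp.equiv 2 _ q').2 - (WithLp.equiv 2 _ q).2⟫ := by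
        rw [InnerProductSpace.toDual_apply_apply, WithLp.prod_inner_apply]
        rfl
      have hnorm : ‖q' - q‖ ^ 2
          = ‖(WithLp.equiv 2 _ q').1 - (WithLp.equiv 2 _ q).1‖ ^ 2
            + ‖(WithLp.equiv 2 _ q').2 - (WithLp.equiv 2 _ q).2‖ ^ 2 := by
        rw [WithLp.prod_norm_sq_eq_of_L2]
        rfl
      rw [hinner, hval q, hval q', hnorm, Real.norm_eq_abs]
      exact aux_key hβ (hmem _ _) (hmem _ _) (hmin _ _) (hmin _ _) (hlip _ _ _ _)
    filter_upwards [Metric.ball_mem_nhds q (div_pos hc hC)] with q' hq'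
    have h1 := key q'
    have h2 : ‖q' - q‖ < c / (β + 1 / β + 4) := by
      rw [← dist_eq_norm]
      exact Metric.mem_ball.mp hq'
    have h3 : (β + 1 / β + 4) * (c / (β + 1 / β + 4)) = c := by field_simp
    nlinarith [norm_nonneg (q' - q), mul_le_mul_of_nonneg_right h2.le (norm_nonneg (q' - q)),
      mul_le_mul_of_nonneg_left
        (mul_le_mul_of_nonneg_right h2.le (norm_nonneg (q' - q))) hC.le]
  · -- Lipschitz
    apply LipschitzWith.of_dist_le_mul
    intro q q'
    rw [Real.coe_toNNReal _ (by positivity), dist_eq_norm, dist_eq_norm]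
    set x := (WithLp.equiv 2 _ q).1 with hxd
    set z := (WithLp.equiv 2 _ q).2 with hzd
    set x' := (WithLp.equiv 2 _ q').1 with hxd'
    set z' := (WithLp.equiv 2 _ q').2 with hzd'
    set w := ystar x z with hwd
    set w' := ystar x' z' with hwd'
    set s : EuclideanSpace ℝ (Fin n) := (w - x) - (w' - x') with hsd
    have hfst : (etaGrad β ystar q - etaGrad β ystar q').fst = (z' - z) - β • s := by
      have h0 : (etaGrad β ystar q - etaGrad β ystar q').fst
          = (-z - β • (w - x)) - (-z' - β • (w' - x')) := rfl
      rw [h0, hsd]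
      module
    have hsnd : (etaGrad β ystar q - etaGrad β ystar q').snd = s := by
      have h0 : (etaGrad β ystar q - etaGrad β ystar q').snd
          = (w - x) - (w' - x') := rfl
      rw [h0, hsd]
    have hns : ‖etaGrad β ystar q - etaGrad β ystar q'‖ ^ 2
        = ‖(z' - z) - β • s‖ ^ 2 + ‖s‖ ^ 2 := by
      rw [WithLp.prod_norm_sq_eq_of_L2, hfst, hsnd]
    have hnq : ‖q - q'‖ ^ 2 = ‖x - x'‖ ^ 2 + ‖z - z'‖ ^ 2 := by
      rw [WithLp.prod_norm_sq_eq_of_L2]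
      rfl
    set a := ‖x - x'‖ with had
    set b := ‖z - z'‖ with hbd
    have ha0 : 0 ≤ a := norm_nonneg _
    have hb0 : 0 ≤ b := norm_nonneg _
    set u := 1 / (2 * β) with hud
    have hu0 : 0 < u := by positivity
    have hu1 : β * u = 1 / 2 := by rw [hud]; field_simp
    have hm : β * ‖w - w'‖ ≤ β * a + b := hlip x z x' z'
    have hs1 : ‖s‖ ≤ ‖w - w'‖ + a := by
      have h0 : s = (w - w') - (x - x') := by rw [hsd]; abel
      rw [h0]
      exact norm_sub_le _ _
    have hs0 : 0 ≤ ‖s‖ := norm_nonneg _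
    have hsb : β * ‖s‖ ≤ 2 * β * a + b := by
      have := mul_le_mul_of_nonneg_left hs1 hβ.le
      nlinarith
    have hf : ‖(z' - z) - β • s‖ ≤ 2 * β * a + 2 * b := by
      have h0 : ‖(z' - z) - β • s‖ ≤ ‖z' - z‖ + ‖β • s‖ := norm_sub_le _ _
      rw [norm_smul, Real.norm_eq_abs, abs_of_pos hβ] at h0
      have hzz : ‖z' - z‖ = b := by rw [hbd, norm_sub_rev]
      nlinarith [hsb, hzz, h0]
    have hf0 : 0 ≤ ‖(z' - z) - β • s‖ := norm_nonneg _
    have hss : ‖s‖ ≤ 2 * a + 2 * u * b := by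
      rw [← mul_le_mul_iff_right₀ hβ]
      nlinarith [hsb, hu1]
    have hA0 : (0:ℝ) ≤ (1 + β) ^ 2 + (1 + 1 / (2 * β)) ^ 2 := by positivity
    have key2 : ‖etaGrad β ystar q - etaGrad β ystar q'‖ ^ 2
        ≤ (2 * Real.sqrt ((1 + β) ^ 2 + (1 + 1 / (2 * β)) ^ 2) * ‖q - q'‖) ^ 2 := by
      have hsq : (2 * Real.sqrt ((1 + β) ^ 2 + (1 + 1 / (2 * β)) ^ 2) * ‖q - q'‖) ^ 2
          = 4 * ((1 + β) ^ 2 + (1 + u) ^ 2) * ‖q - q'‖ ^ 2 := by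
        rw [mul_pow, mul_pow, Real.sq_sqrt hA0, hud]
        ring
      rw [hsq, hns, hnq]
      nlinarith [hf, hss, hf0, hs0, ha0, hb0, hu0, sq_nonneg (a - b),
        mul_nonneg hβ.le (sq_nonneg (a - b)), mul_nonneg hu0.le (sq_nonneg (a - b)),
        sq_nonneg (u * a), mul_nonneg (mul_nonneg hβ.le hβ.le) (sq_nonneg (a - b)),
        mul_nonneg (mul_nonneg hu0.le hu0.le) (sq_nonneg a), sq_nonneg (β * a - b),
        mul_nonneg hβ.le hb0, mul_nonneg hu0.le ha0]
    nlinarith [key2, norm_nonneg (etaGrad β ystar q - etaGrad β ystar q'),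
      mul_nonneg (by positivity :
        (0:ℝ) ≤ 2 * Real.sqrt ((1 + β) ^ 2 + (1 + 1 / (2 * β)) ^ 2)) (norm_nonneg (q - q'))]


end
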